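/- Let G ∈ ℝ^{n×n} and fix indices i < j. Then min over η ∈ ℝ of Tr(G · exp(−η H_{ij})) equals ∑_{i' ∉ {i,j}} G_{i'i'} − √((G_{ii}+G_{jj})² + (G_{ij}−G_{ji})²), where H_{ij} = e_i e_jᵀ − e_j e_iᵀ. -/

import Mathlib

open Matrix
open scoped Nat

private lemma aux_bound (a b θ : ℝ) :
    -Real.sqrt (a ^ 2 + b ^ 2) ≤ a * Real.cos θ + b * Real.sin θ := by
  have h1 : Real.sin θ ^ 2 + Real.cos θ ^ 2 = 1 := Real.sin_sq_add_cos_sq θ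
  have h2 : Real.sqrt (a ^ 2 + b ^ 2) ^ 2 = a ^ 2 + b ^ 2 :=
    Real.sq_sqrt (by positivity)
  have h3 : 0 ≤ Real.sqrt (a ^ 2 + b ^ 2) := Real.sqrt_nonneg _
  nlinarith [sq_nonneg (a * Real.sin θ - b * Real.cos θ),
    sq_nonneg (a * Real.cos θ + b * Real.sin θ + Real.sqrt (a ^ 2 + b ^ 2))]

private lemma aux_trig (a b : ℝ) :
    ∃ θ : ℝ, a * Real.cos θ + b * Real.sin θ = -Real.sqrt (a ^ 2 + b ^ 2) := by
  set r := Real.sqrt (a ^ 2 + b ^ 2) with hr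
  have hrnn : 0 ≤ r := Real.sqrt_nonneg _
  have hr2 : r ^ 2 = a ^ 2 + b ^ 2 := Real.sq_sqrt (by positivity)
  rcases eq_or_lt_of_le hrnn with h0 | hpos
  · have ha : a = 0 := by nlinarith
    have hb : b = 0 := by nlinarith
    exact ⟨0, by simp [ha, hb, ← h0]⟩
  · have hx : -a / r ∈ Set.Icc (-1 : ℝ) 1 := by
      constructor
      · rw [le_div_iff₀ hpos]; nlinarith
      · rw [div_le_iff₀ hpos]; nlinarith
    have hcos : Real.cos (Real.arccos (-a / r)) = -a / r := Real.cos_arccos hx.1 hx.2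
    have hsin : Real.sin (Real.arccos (-a / r)) = Real.sqrt (1 - (-a / r) ^ 2) :=
      Real.sin_arccos _
    have hsq : 1 - (-a / r) ^ 2 = (b / r) ^ 2 := by
      field_simp
      nlinarith
    have hsin' : Real.sin (Real.arccos (-a / r)) = |b| / r := by
      rw [hsin, hsq, Real.sqrt_sq_eq_abs, abs_div, abs_of_pos hpos]
    rcases le_or_gt 0 b with hb | hb
    · refine ⟨-Real.arccos (-a / r), ?_⟩
      rw [Real.cos_neg, Real.sin_neg, hcos, hsin', abs_of_nonneg hb]
      field_simp
      nlinarith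
    · refine ⟨Real.arccos (-a / r), ?_⟩
      rw [hcos, hsin', abs_of_neg hb]
      field_simp
      nlinarith

private lemma exp_smul_rot {N : ℕ} (i j : Fin N) (hij : i ≠ j) (t : ℝ) :
    NormedSpace.exp (t • (Matrix.single i j (1 : ℝ) - Matrix.single j i 1)) =
      (1 - (Matrix.single i i (1 : ℝ) + Matrix.single j j 1)) +
        Real.cos t • (Matrix.single i i (1 : ℝ) + Matrix.single j j 1) +
        Real.sin t • (Matrix.single i j (1 : ℝ) - Matrix.single j i 1) := by
  letI : NormedRing (Matrix (Fin N) (Fin N) ℝ) := Matrix.linftyOpNormedRing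
  letI : NormedAlgebra ℝ (Matrix (Fin N) (Fin N) ℝ) := Matrix.linftyOpNormedAlgebra
  set H : Matrix (Fin N) (Fin N) ℝ :=
    Matrix.single i j (1 : ℝ) - Matrix.single j i 1 with hHdef
  set P : Matrix (Fin N) (Fin N) ℝ :=
    Matrix.single i i (1 : ℝ) + Matrix.single j j 1 with hPdef
  have hHH : H * H = -P := by
    simp [hHdef, hPdef, Matrix.sub_mul, Matrix.mul_sub, hij, hij.symm]
    abel
  have hHP : H * P = H := by
    simp [hHdef, hPdef, Matrix.sub_mul, Matrix.mul_add, hij, hij.symm]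
    abel
  have hodd : ∀ k : ℕ, H ^ (2 * k + 1) = ((-1 : ℝ) ^ k) • H := by
    intro k
    induction k with
    | zero => simp
    | succ k ih =>
      have : 2 * (k + 1) + 1 = (2 * k + 1) + 2 := by ring
      rw [this, pow_add, ih, sq, hHH, smul_mul_assoc, mul_neg, hHP, pow_succ]
      module
  have heven : ∀ k : ℕ, H ^ (2 * (k + 1)) = ((-1 : ℝ) ^ (k + 1)) • P := by
    intro k
    have : 2 * (k + 1) = (2 * k + 1) + 1 := by ring
    rw [this, pow_succ, hodd, smul_mul_assoc, hHH, pow_succ]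
    module
  rw [NormedSpace.exp_eq_tsum ℝ]
  refine HasSum.tsum_eq ?_
  have hE : HasSum (fun k : ℕ => (((2 * k)! : ℝ)⁻¹) • (t • H) ^ (2 * k))
      (Real.cos t • P + (1 - P)) := by
    have h1 : HasSum (fun k : ℕ => ((-1 : ℝ) ^ k * t ^ (2 * k) / (2 * k)!) • P)
        (Real.cos t • P) := (Real.hasSum_cos t).smul_const P
    have h2 : HasSum (fun k : ℕ => if k = 0 then (1 - P) else 0) (1 - P) :=
      hasSum_ite_eq 0 (1 - P)
    have hfun : (fun k : ℕ => (((2 * k)! : ℝ)⁻¹) • (t • H) ^ (2 * k)) =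
        fun k : ℕ => ((-1 : ℝ) ^ k * t ^ (2 * k) / (2 * k)!) • P +
          (if k = 0 then (1 - P) else 0) := by
      funext k
      cases k with
      | zero => simp
      | succ k =>
        rw [smul_pow, heven k, if_neg (Nat.succ_ne_zero k), add_zero, smul_smul, smul_smul]
        congr 1
        field_simp
    rw [hfun]
    exact h1.add h2
  have hO : HasSum (fun k : ℕ => (((2 * k + 1)! : ℝ)⁻¹) • (t • H) ^ (2 * k + 1))
      (Real.sin t • H) := by
    have h1 : HasSum (fun k : ℕ => ((-1 : ℝ) ^ k * t ^ (2 * k + 1) / (2 * k + 1)!) • H)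
        (Real.sin t • H) := (Real.hasSum_sin t).smul_const H
    have hfun : (fun k : ℕ => (((2 * k + 1)! : ℝ)⁻¹) • (t • H) ^ (2 * k + 1)) =
        fun k : ℕ => ((-1 : ℝ) ^ k * t ^ (2 * k + 1) / (2 * k + 1)!) • H := by
      funext k
      rw [smul_pow, hodd k, smul_smul, smul_smul]
      congr 1
      field_simp
    rw [hfun]
    exact h1
  have total := HasSum.even_add_odd
    (f := fun m : ℕ => ((m ! : ℝ))⁻¹ • (t • H) ^ m) hE hO
  have hre : (1 - P) + Real.cos t • P + Real.sin t • H =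
      (Real.cos t • P + (1 - P)) + Real.sin t • H := by abel
  rw [hre]
  exact total

private lemma trace_mul_stdBasis {N : ℕ} (G : Matrix (Fin N) (Fin N) ℝ) (a b : Fin N) :
    Matrix.trace (G * Matrix.single a b (1 : ℝ)) = G b a := by
  rw [Matrix.trace]
  rw [Finset.sum_eq_single b]
  · simp [Matrix.diag]
  · intro k _ hk
    simp [Matrix.diag, hk]
  · simp

theorem stmt16 {n : ℕ} (G : Matrix (Fin n) (Fin n) ℝ) (i j : Fin n) (hij : i < j)
    (H : Matrix (Fin n) (Fin n) ℝ)
    (hH : H = Matrix.single i j 1 - Matrix.single j i 1) :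
    IsLeast {x : ℝ | ∃ η : ℝ, x = Matrix.trace (G * NormedSpace.exp (-η • H))}
      ((∑ i' ∈ Finset.univ.filter fun i' => i' ≠ i ∧ i' ≠ j, G i' i') -
        Real.sqrt ((G i i + G j j) ^ 2 + (G i j - G j i) ^ 2)) := by
  have hij' : i ≠ j := ne_of_lt hij
  set S : ℝ := ∑ i' ∈ Finset.univ.filter fun i' => i' ≠ i ∧ i' ≠ j, G i' i' with hS
  set a : ℝ := G i i + G j j with ha
  set b : ℝ := G j i - G i j with hb
  -- trace formula
  have htrace : ∀ t : ℝ, Matrix.trace (G * NormedSpace.exp (t • H)) =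
      S + a * Real.cos t + b * Real.sin t := by
    intro t
    rw [hH, exp_smul_rot i j hij' t]
    set P : Matrix (Fin n) (Fin n) ℝ :=
      Matrix.single i i (1 : ℝ) + Matrix.single j j 1 with hPdef
    set H' : Matrix (Fin n) (Fin n) ℝ :=
      Matrix.single i j (1 : ℝ) - Matrix.single j i 1 with hH'def
    have hGP : Matrix.trace (G * P) = a := by
      rw [hPdef, Matrix.mul_add, Matrix.trace_add, trace_mul_stdBasis, trace_mul_stdBasis, ha]
    have hGH : Matrix.trace (G * H') = b := by
      rw [hH'def, Matrix.mul_sub, Matrix.trace_sub, trace_mul_stdBasis, trace_mul_stdBasis, hb]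
    have hGid : Matrix.trace (G * (1 - P)) = S := by
      rw [Matrix.mul_sub, Matrix.mul_one, Matrix.trace_sub, hGP]
      have hsplit : Matrix.trace G =
          S + ∑ i' ∈ Finset.univ.filter fun i' => ¬(i' ≠ i ∧ i' ≠ j), G i' i' := by
        rw [hS, Matrix.trace]
        exact (Finset.sum_filter_add_sum_filter_not Finset.univ _ _).symm
      have hcompl : (Finset.univ.filter fun i' : Fin n => ¬(i' ≠ i ∧ i' ≠ j)) = {i, j} := by
        ext x
        simp only [Finset.mem_filter, Finset.mem_univ, true_and, Finset.mem_insert,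
          Finset.mem_singleton, not_and_or, not_not]
      rw [hsplit, hcompl, Finset.sum_insert (by simp [hij']), Finset.sum_singleton, ha]
      ring
    rw [Matrix.mul_add, Matrix.mul_add, Matrix.trace_add, Matrix.trace_add,
      Matrix.mul_smul, Matrix.mul_smul, Matrix.trace_smul, Matrix.trace_smul,
      hGid, hGP, hGH, smul_eq_mul, smul_eq_mul]
    ring
  have hsqrt : Real.sqrt ((G i i + G j j) ^ 2 + (G i j - G j i) ^ 2) =
      Real.sqrt (a ^ 2 + b ^ 2) := by
    rw [ha, hb]; ring_nf
  rw [hsqrt]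
  constructor
  · obtain ⟨θ, hθ⟩ := aux_trig a b
    refine ⟨-θ, ?_⟩
    rw [show -(-θ) • H = θ • H by rw [neg_neg], htrace θ]
    linarith
  · rintro x ⟨η, rfl⟩
    rw [htrace (-η)]
    have := aux_bound a b (-η)
    linarith
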